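/- Let ⟨P, ⊴⟩ be a partial order PR on a Kripke structure (⊴ is a partial order on the blocks of P). Then there exists a partition refiner (a block C such that for some block B, B ∩ pre(μ𝒫(C)) ≠ ∅ and B \ pre(μ𝒫(C)) ≠ ∅) if and only if there exist blocks B, C ∈ P such that: (i) B →∃ C; (ii) for every block C' with C ⊲ C' (C ⊴ C' and C ≠ C'), B not→∃ C'; and (iii) B ⊄ pre(C). -/

import Mathlib

/-- `P` is a partition of the whole state space. -/
def IsPartition {α : Type*} (P : Set (Set α)) : Prop :=
  (∀ B ∈ P, B.Nonempty) ∧ (∀ x : α, ∃! B, B ∈ P ∧ x ∈ B)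

/-- `pre(T) = {s | ∃ t ∈ T, s → t}`. -/
def preR {α : Type*} (tr : α → α → Prop) (T : Set α) : Set α :=
  {s | ∃ t ∈ T, tr s t}

/-- `S₁ →∃ S₂` iff some state of `S₁` has a transition into `S₂`. -/
def exE {α : Type*} (tr : α → α → Prop) (S T : Set α) : Prop :=
  ∃ s ∈ S, ∃ t ∈ T, tr s t

/-- `μ𝒫(C) = ⋃ {E ∈ P | C ⊴ E}` for a block `C` of `P`. -/
def muBlk {α : Type*} (P : Set (Set α)) (ord : Set α → Set α → Prop)
    (C : Set α) : Set α :=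
  ⋃₀ {E | E ∈ P ∧ ord C E}

/-- `C` is a partition refiner for `⟨P,⊴⟩`: some block `B` meets
`pre(μ𝒫(C))` but is not contained in it. -/
def IsPRefiner {α : Type*} (tr : α → α → Prop) (P : Set (Set α))
    (ord : Set α → Set α → Prop) (C : Set α) : Prop :=
  C ∈ P ∧ ∃ B ∈ P, (B ∩ preR tr (muBlk P ord C)).Nonempty ∧
    (B \ preR tr (muBlk P ord C)).Nonempty

/-- Characterization of the existence of a partition refiner for a partial
order PR on a finite Kripke structure: a partition refiner exists iff there
are blocks `B, C ∈ P` such that (i) `B →∃ C`, (ii) `B ¬→∃ C'` for every block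
`C'` strictly above `C`, and (iii) `B ⊄ pre(C)`. -/
theorem stmt9 {α : Type*} [Finite α] (tr : α → α → Prop)
    (P : Set (Set α)) (hP : IsPartition P)
    (ord : Set α → Set α → Prop)
    (hrefl : ∀ B ∈ P, ord B B)
    (htrans : ∀ B ∈ P, ∀ C ∈ P, ∀ D ∈ P, ord B C → ord C D → ord B D)
    (hantisym : ∀ B ∈ P, ∀ C ∈ P, ord B C → ord C B → B = C) :
    (∃ C, IsPRefiner tr P ord C) ↔
    (∃ B ∈ P, ∃ C ∈ P, exE tr B C ∧
      (∀ C' ∈ P, ord C C' → C ≠ C' → ¬ exE tr B C') ∧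
      ¬ B ⊆ preR tr C) := by
  constructor
  · rintro ⟨C0, hC0⟩
    set S : Set (Set α) := {C | IsPRefiner tr P ord C} with hS
    have hfin : S.Finite := Set.toFinite S
    obtain ⟨C, hCS, hmin⟩ := Set.Finite.exists_minimalFor
      (fun C => {E | E ∈ P ∧ ord C E}) S hfin ⟨C0, hC0⟩
    obtain ⟨hCP, B, hBP, ⟨s, hsB, hspre⟩, ⟨b, hbB, hbnp⟩⟩ := hCS
    -- key: no transition from B into a block strictly above C
    have key : ∀ C' ∈ P, ord C C' → C ≠ C' → ¬ exE tr B C' := by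
      rintro C' hC'P hCC' hne ⟨s', hs'B, t', ht'C', hst'⟩
      have hC'S : C' ∈ S := by
        refine ⟨hC'P, B, hBP, ⟨s', hs'B, t', ⟨C', ⟨hC'P, hrefl C' hC'P⟩, ht'C'⟩, hst'⟩,
          b, hbB, ?_⟩
        rintro ⟨t, ⟨E, ⟨hE, hC'E⟩, htE⟩, hbt⟩
        exact hbnp ⟨t, ⟨E, ⟨hE, htrans C hCP C' hC'P E hE hCC' hC'E⟩, htE⟩, hbt⟩
      have hle : {E | E ∈ P ∧ ord C' E} ≤ {E | E ∈ P ∧ ord C E} := by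
        rintro E ⟨hE, hC'E⟩
        exact ⟨hE, htrans C hCP C' hC'P E hE hCC' hC'E⟩
      have heq : {E | E ∈ P ∧ ord C E} = {E | E ∈ P ∧ ord C' E} := le_antisymm (hmin hC'S hle) hle
      have hCmem : C ∈ {E | E ∈ P ∧ ord C' E} := by
        rw [← heq]; exact ⟨hCP, hrefl C hCP⟩
      exact hne (hantisym C hCP C' hC'P hCC' hCmem.2)
    obtain ⟨t, ⟨E, ⟨hEP, hCE⟩, htE⟩, hst⟩ := hspre
    by_cases h : C = E
    · refine ⟨B, hBP, C, hCP, ⟨s, hsB, t, h ▸ htE, hst⟩, key, ?_⟩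
      intro hsub
      obtain ⟨t', ht'C, hbt'⟩ := hsub hbB
      exact hbnp ⟨t', ⟨C, ⟨hCP, hrefl C hCP⟩, ht'C⟩, hbt'⟩
    · exact absurd ⟨s, hsB, t, htE, hst⟩ (key E hEP hCE h)
  · rintro ⟨B, hB, C, hC, ⟨s, hsB, t, htC, hst⟩, hii, hiii⟩
    refine ⟨C, hC, B, hB, ⟨s, hsB, t, ⟨C, ⟨hC, hrefl C hC⟩, htC⟩, hst⟩, ?_⟩
    obtain ⟨b, hbB, hbnp⟩ := Set.not_subset.mp hiii
    refine ⟨b, hbB, ?_⟩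
    rintro ⟨t', ⟨E, ⟨hE, hCE⟩, ht'E⟩, hbt'⟩
    by_cases h : C = E
    · exact hbnp ⟨t', h ▸ ht'E, hbt'⟩
    · exact hii E hE hCE h ⟨b, hbB, t', ht'E, hbt'⟩
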